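/- For every integer k ≥ 3, there exists a connected finite simple graph G of order k·(2^(k−1) − 1), with exactly k·(k−1)·2^(2k−5) edges, diameter 3, minimum degree 2^(k−2), maximum degree (k−1)·2^(k−2), and neighbor-locating chromatic number χ_NL(G) = k. -/

import Mathlib

open SimpleGraph Finset

/-- A coloring `c : V → Fin k` is a *neighbor-locating coloring* of `G` if it is proper and
any two distinct vertices with the same color have different sets of colors on their
open neighborhoods. -/
def IsNLColoring {V : Type*} (G : SimpleGraph V) {k : ℕ} (c : V → Fin k) : Prop :=
  (∀ u v : V, G.Adj u v → c u ≠ c v) ∧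
  ∀ u v : V, u ≠ v → c u = c v → c '' (G.neighborSet u) ≠ c '' (G.neighborSet v)

/-- The neighbor-locating chromatic number: the least `k` admitting an NL-coloring. -/
noncomputable def nlChromaticNumber {V : Type*} (G : SimpleGraph V) : ℕ :=
  sInf {k : ℕ | ∃ c : V → Fin k, IsNLColoring G c}

namespace NLAux

abbrev Vert (k : ℕ) := {p : Fin k × Finset (Fin k) // p.1 ∉ p.2 ∧ p.2.Nonempty}

def graph (k : ℕ) : SimpleGraph (Vert k) where
  Adj u v := u.1.1 ∈ v.1.2 ∧ v.1.1 ∈ u.1.2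
  symm := ⟨fun _ _ h => ⟨h.2, h.1⟩⟩
  loopless := ⟨fun u h => u.2.1 h.2⟩

instance (k : ℕ) : DecidableRel (graph k).Adj := fun _ _ => instDecidableAnd

lemma adj_iff {k : ℕ} {u v : Vert k} :
    (graph k).Adj u v ↔ u.1.1 ∈ v.1.2 ∧ v.1.1 ∈ u.1.2 := Iff.rfl

lemma card_filter_prod {α β : Type*} [Fintype α] [Fintype β] (C : α × β → Prop)
    [DecidablePred C] :
    (univ.filter C).card = ∑ a : α, (univ.filter fun b => C (a, b)).card := by
  rw [Finset.card_filter, Fintype.sum_prod_type]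
  exact Finset.sum_congr rfl fun a _ => (Finset.card_filter _ _).symm

lemma sum_filter_prod {α β M : Type*} [Fintype α] [Fintype β] [AddCommMonoid M]
    (C : α × β → Prop) [DecidablePred C] (f : α × β → M) :
    ∑ p ∈ univ.filter C, f p = ∑ a : α, ∑ b ∈ univ.filter (fun b => C (a, b)), f (a, b) := by
  rw [Finset.sum_filter, Fintype.sum_prod_type]
  exact Finset.sum_congr rfl fun a _ => (Finset.sum_filter _ _).symm

lemma filter_not_mem_nonempty (m : ℕ) (i : Fin m) :
    (univ.filter fun B : Finset (Fin m) => i ∉ B ∧ B.Nonempty)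
      = ((univ.erase i).powerset).erase ∅ := by
  ext B
  simp [Finset.subset_erase, Finset.nonempty_iff_ne_empty, and_comm]

lemma card_filter_not_mem_nonempty (m : ℕ) (i : Fin m) :
    (univ.filter fun B : Finset (Fin m) => i ∉ B ∧ B.Nonempty).card = 2 ^ (m - 1) - 1 := by
  rw [filter_not_mem_nonempty, Finset.card_erase_of_mem (Finset.empty_mem_powerset _),
    Finset.card_powerset, Finset.card_erase_of_mem (Finset.mem_univ _), Finset.card_univ,
    Fintype.card_fin]

lemma card_filter_mem_not_mem {m : ℕ} (i j : Fin m) (h : j ≠ i) :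
    (univ.filter fun B : Finset (Fin m) => i ∈ B ∧ j ∉ B).card = 2 ^ (m - 2) := by
  have hcard : (((univ : Finset (Fin m)).erase j).erase i).card = m - 2 := by
    rw [Finset.card_erase_of_mem (Finset.mem_erase.mpr ⟨Ne.symm h, Finset.mem_univ _⟩),
      Finset.card_erase_of_mem (Finset.mem_univ _), Finset.card_univ, Fintype.card_fin]
    omega
  have key : (univ.filter fun B : Finset (Fin m) => i ∈ B ∧ j ∉ B).card
      = ((((univ : Finset (Fin m)).erase j).erase i).powerset).card := by
    refine Finset.card_bij' (fun B _ => B.erase i) (fun C _ => insert i C) ?_ ?_ ?_ ?_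
    · intro B hB
      simp only [Finset.mem_filter] at hB
      simp only [Finset.mem_powerset, Finset.subset_erase]
      refine ⟨⟨fun x hx => Finset.mem_univ _, ?_⟩, ?_⟩
      · exact fun hji => hB.2.2 (Finset.mem_of_mem_erase hji)
      · exact Finset.notMem_erase _ _
    · intro C hC
      simp only [Finset.mem_powerset, Finset.subset_erase] at hC
      simp only [Finset.mem_filter, Finset.mem_univ, true_and]
      refine ⟨Finset.mem_insert_self _ _, ?_⟩
      intro hj
      rcases Finset.mem_insert.mp hj with h' | h'
      · exact h h'
      · exact hC.1.2 h'
    · intro B hB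
      simp only [Finset.mem_filter] at hB
      exact Finset.insert_erase hB.2.1
    · intro C hC
      simp only [Finset.mem_powerset, Finset.subset_erase] at hC
      exact Finset.erase_insert hC.2
  rw [key, Finset.card_powerset, hcard]

lemma two_mul_sum_powerset_card {α : Type*} [DecidableEq α] (s : Finset α) :
    (∑ B ∈ s.powerset, B.card) * 2 = s.card * 2 ^ s.card := by
  induction s using Finset.induction_on with
  | empty => simp
  | @insert a s ha IH =>
    rw [Finset.powerset_insert, Finset.sum_union, Finset.sum_image]
    · have h1 : ∑ B ∈ s.powerset, (insert a B).card = (∑ B ∈ s.powerset, B.card) + 2 ^ s.card := by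
        have hc : ∀ B ∈ s.powerset, (insert a B).card = B.card + 1 := fun B hB =>
          Finset.card_insert_of_notMem fun hmem => ha (Finset.mem_powerset.mp hB hmem)
        rw [Finset.sum_congr rfl hc, Finset.sum_add_distrib, Finset.sum_const, smul_eq_mul,
          mul_one, Finset.card_powerset]
      rw [h1, Finset.card_insert_of_notMem ha, pow_succ]
      nlinarith [IH]
    · intro B hB C hC hBC
      have haB : a ∉ B := fun hmem => ha (Finset.mem_powerset.mp hB hmem)
      have haC : a ∉ C := fun hmem => ha (Finset.mem_powerset.mp hC hmem)
      rw [← Finset.erase_insert haB, ← Finset.erase_insert haC, hBC]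
    · rw [Finset.disjoint_left]
      intro B hB hB2
      rcases Finset.mem_image.mp hB2 with ⟨C, hC, rfl⟩
      exact ha (Finset.mem_powerset.mp hB (Finset.mem_insert_self _ _))

lemma card_vert (m : ℕ) : Fintype.card (Vert m) = m * (2 ^ (m - 1) - 1) := by
  rw [Fintype.card_subtype, card_filter_prod]
  simp [card_filter_not_mem_nonempty]

/-- The equivalence between the neighbor set of `v` and a set of pairs. -/
def nbhdEquiv {k : ℕ} (v : Vert k) :
    ((graph k).neighborSet v) ≃
      {p : Fin k × Finset (Fin k) //
        (p.1 ∉ p.2 ∧ p.2.Nonempty) ∧ (v.1.1 ∈ p.2 ∧ p.1 ∈ v.1.2)} where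
  toFun w := ⟨w.1.1, w.1.2, w.2⟩
  invFun p := ⟨⟨p.1, p.2.1⟩, p.2.2⟩
  left_inv _ := rfl
  right_inv _ := rfl

lemma degree_eq {k : ℕ} (v : Vert k) : (graph k).degree v = v.1.2.card * 2 ^ (k - 2) := by
  rw [← card_neighborSet_eq_degree, Fintype.card_congr (nbhdEquiv v), Fintype.card_subtype,
    card_filter_prod]
  have hval : ∀ j : Fin k,
      (univ.filter fun B : Finset (Fin k) =>
        (j ∉ B ∧ B.Nonempty) ∧ (v.1.1 ∈ B ∧ j ∈ v.1.2)).card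
        = if j ∈ v.1.2 then 2 ^ (k - 2) else 0 := by
    intro j
    by_cases hj : j ∈ v.1.2
    · rw [if_pos hj]
      have hiff : ∀ B : Finset (Fin k),
          ((j ∉ B ∧ B.Nonempty) ∧ (v.1.1 ∈ B ∧ j ∈ v.1.2)) ↔ (v.1.1 ∈ B ∧ j ∉ B) := by
        intro B
        constructor
        · rintro ⟨⟨h1, _⟩, h3, _⟩; exact ⟨h3, h1⟩
        · rintro ⟨h1, h2⟩; exact ⟨⟨h2, ⟨_, h1⟩⟩, h1, hj⟩
      rw [Finset.filter_congr fun B _ => hiff B]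
      exact card_filter_mem_not_mem _ _ (fun hji => v.2.1 (hji ▸ hj))
    · rw [if_neg hj, Finset.filter_false_of_mem fun B _ => by tauto, Finset.card_empty]
  rw [Finset.sum_congr rfl fun j _ => hval j, Finset.sum_ite_mem, Finset.univ_inter,
    Finset.sum_const, smul_eq_mul]

lemma card_le_of_mem {k : ℕ} (v : Vert k) : v.1.2.card ≤ k - 1 := by
  have : v.1.2 ⊆ univ.erase v.1.1 := fun x hx =>
    Finset.mem_erase.mpr ⟨fun h => v.2.1 (h ▸ hx), Finset.mem_univ _⟩
  have := Finset.card_le_card this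
  rwa [Finset.card_erase_of_mem (Finset.mem_univ _), Finset.card_univ, Fintype.card_fin] at this

lemma edge_count {k : ℕ} (hk : 3 ≤ k) :
    (graph k).edgeFinset.card = k * (k - 1) * 2 ^ (2 * k - 5) := by
  have key : ∀ i : Fin k,
      (∑ B ∈ univ.filter (fun B : Finset (Fin k) => i ∉ B ∧ B.Nonempty), B.card) * 2
        = (k - 1) * 2 ^ (k - 1) := by
    intro i
    rw [filter_not_mem_nonempty, Finset.sum_erase _ (Finset.card_empty),
      two_mul_sum_powerset_card, Finset.card_erase_of_mem (Finset.mem_univ _),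
      Finset.card_univ, Fintype.card_fin]
  have h2 : (∑ v : Vert k, (graph k).degree v) * 2
      = k * ((k - 1) * 2 ^ (k - 1) * 2 ^ (k - 2)) := by
    have e0 : ∑ v : Vert k, (graph k).degree v
        = ∑ p ∈ univ.filter (fun p : Fin k × Finset (Fin k) => p.1 ∉ p.2 ∧ p.2.Nonempty),
            p.2.card * 2 ^ (k - 2) := by
      rw [Finset.sum_subtype (p := fun p : Fin k × Finset (Fin k) => p.1 ∉ p.2 ∧ p.2.Nonempty)
        _ (fun x => by simp) (fun p => p.2.card * 2 ^ (k - 2))]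
      exact Finset.sum_congr rfl fun v _ => degree_eq v
    have e1 : (∑ v : Vert k, (graph k).degree v) * 2
        = ∑ p ∈ univ.filter (fun p : Fin k × Finset (Fin k) => p.1 ∉ p.2 ∧ p.2.Nonempty),
            p.2.card * 2 ^ (k - 2) * 2 := by
      rw [e0, Finset.sum_mul]
    rw [e1, sum_filter_prod]
    have e2 : ∀ i : Fin k,
        ∑ B ∈ univ.filter (fun B : Finset (Fin k) => i ∉ B ∧ B.Nonempty),
          B.card * 2 ^ (k - 2) * 2 = (k - 1) * 2 ^ (k - 1) * 2 ^ (k - 2) := by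
      intro i
      have : ∑ B ∈ univ.filter (fun B : Finset (Fin k) => i ∉ B ∧ B.Nonempty),
          B.card * 2 ^ (k - 2) * 2
          = ((∑ B ∈ univ.filter (fun B : Finset (Fin k) => i ∉ B ∧ B.Nonempty), B.card) * 2)
            * 2 ^ (k - 2) := by
        rw [Finset.sum_mul, Finset.sum_mul]
        exact Finset.sum_congr rfl fun B _ => by ring
      rw [this, key i]
    rw [Finset.sum_congr rfl fun i _ => e2 i, Finset.sum_const, Finset.card_univ,
      Fintype.card_fin, smul_eq_mul]
  rw [sum_degrees_eq_twice_card_edges] at h2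
  have hpow : (2:ℕ) ^ (k - 1) * 2 ^ (k - 2) = 2 ^ (2 * k - 5) * 2 * 2 := by
    rw [← pow_succ, ← pow_succ, ← pow_add]
    congr 1
    omega
  have h4 : 2 * (graph k).edgeFinset.card * 2 = 2 * (k * (k - 1) * 2 ^ (2 * k - 5)) * 2 := by
    rw [h2, show (k - 1) * 2 ^ (k - 1) * 2 ^ (k - 2)
      = (k - 1) * (2 ^ (k - 1) * 2 ^ (k - 2)) from by ring, hpow]
    ring
  omega


section Walks

variable {k : ℕ}

lemma exists_walk_le3 (u v : Vert k) : ∃ p : (graph k).Walk u v, p.length ≤ 3 := by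
  classical
  by_cases huv : u = v
  · subst huv; exact ⟨SimpleGraph.Walk.nil, by simp⟩
  obtain ⟨⟨i, A⟩, hiA, hA⟩ := u
  obtain ⟨⟨j, B⟩, hjB, hB⟩ := v
  simp only at hiA hjB
  by_cases hab : ∃ a ∈ A, ∃ b ∈ B, a ≠ b
  · obtain ⟨a, ha, b, hb, hne⟩ := hab
    have hai : a ≠ i := fun h => hiA (h ▸ ha)
    have hbj : b ≠ j := fun h => hjB (h ▸ hb)
    have hw1p : a ∉ ({i, b} : Finset (Fin k)) := by
      simp only [Finset.mem_insert, Finset.mem_singleton]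
      push_neg
      exact ⟨hai, hne⟩
    have hw2p : b ∉ ({j, a} : Finset (Fin k)) := by
      simp only [Finset.mem_insert, Finset.mem_singleton]
      push_neg
      exact ⟨hbj, hne.symm⟩
    have h1 : (graph k).Adj ⟨(i, A), hiA, hA⟩ ⟨(a, {i, b}), hw1p, Finset.insert_nonempty _ _⟩ :=
      adj_iff.mpr ⟨by simp, ha⟩
    have h2 : (graph k).Adj ⟨(a, {i, b}), hw1p, Finset.insert_nonempty _ _⟩
        ⟨(b, {j, a}), hw2p, Finset.insert_nonempty _ _⟩ :=
      adj_iff.mpr ⟨by simp, by simp⟩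
    have h3 : (graph k).Adj ⟨(b, {j, a}), hw2p, Finset.insert_nonempty _ _⟩
        ⟨(j, B), hjB, hB⟩ := adj_iff.mpr ⟨hb, by simp⟩
    exact ⟨SimpleGraph.Walk.cons h1 (SimpleGraph.Walk.cons h2
      (SimpleGraph.Walk.cons h3 SimpleGraph.Walk.nil)), by simp⟩
  · push_neg at hab
    obtain ⟨a, ha⟩ := hA
    obtain ⟨b, hb⟩ := hB
    have hEq : a = b := hab a ha b hb
    have ha' : a ∈ B := hEq ▸ hb
    have hai : a ≠ i := fun h => hiA (h ▸ ha)
    have haj : a ≠ j := fun h => hjB (h ▸ ha')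
    have hwp : a ∉ ({i, j} : Finset (Fin k)) := by
      simp only [Finset.mem_insert, Finset.mem_singleton]
      push_neg
      exact ⟨hai, haj⟩
    have h1 : (graph k).Adj ⟨(i, A), hiA, ⟨a, ha⟩⟩
        ⟨(a, {i, j}), hwp, Finset.insert_nonempty _ _⟩ :=
      adj_iff.mpr ⟨by simp, ha⟩
    have h2 : (graph k).Adj ⟨(a, {i, j}), hwp, Finset.insert_nonempty _ _⟩
        ⟨(j, B), hjB, ⟨b, hb⟩⟩ := adj_iff.mpr ⟨ha', by simp⟩
    exact ⟨SimpleGraph.Walk.cons h1 (SimpleGraph.Walk.cons h2 SimpleGraph.Walk.nil), by simp⟩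

lemma graph_connected (hk : 3 ≤ k) : (graph k).Connected := by
  rw [connected_iff]
  refine ⟨fun u v => ?_, ⟨⟨(⟨0, by omega⟩, {⟨1, by omega⟩}), by simp [Fin.ext_iff],
    Finset.singleton_nonempty _⟩⟩⟩
  obtain ⟨p, _⟩ := exists_walk_le3 u v
  exact ⟨p⟩

lemma walk_short {V : Type*} {G : SimpleGraph V} {u v : V} (p : G.Walk u v)
    (h : p.length ≤ 2) : u = v ∨ G.Adj u v ∨ ∃ w, G.Adj u w ∧ G.Adj w v := by
  cases p with
  | nil => exact Or.inl rfl
  | cons h1 q =>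
    cases q with
    | nil => exact Or.inr (Or.inl h1)
    | cons h2 r =>
      simp only [SimpleGraph.Walk.length_cons] at h
      have h0 : r.length = 0 := by omega
      have hw := SimpleGraph.Walk.eq_of_length_eq_zero h0
      subst hw
      exact Or.inr (Or.inr ⟨_, h1, h2⟩)

lemma graph_ediam (hk : 3 ≤ k) : (graph k).ediam = 3 := by
  have h01 : (⟨0, by omega⟩ : Fin k) ≠ ⟨1, by omega⟩ := by simp [Fin.ext_iff]
  have h02 : (⟨0, by omega⟩ : Fin k) ≠ ⟨2, by omega⟩ := by simp [Fin.ext_iff]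
  have h12 : (⟨1, by omega⟩ : Fin k) ≠ ⟨2, by omega⟩ := by simp [Fin.ext_iff]
  set u₀ : Vert k := ⟨(⟨0, by omega⟩, {⟨1, by omega⟩}),
    fun hm => h01 (Finset.mem_singleton.mp hm), Finset.singleton_nonempty _⟩ with hu₀
  set v₀ : Vert k := ⟨(⟨0, by omega⟩, {⟨2, by omega⟩}),
    fun hm => h02 (Finset.mem_singleton.mp hm), Finset.singleton_nonempty _⟩ with hv₀
  apply le_antisymm
  · refine ediam_le_of_edist_le fun u v => ?_
    obtain ⟨p, hp⟩ := exists_walk_le3 u v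
    calc (graph k).edist u v ≤ p.length := SimpleGraph.edist_le p
      _ ≤ 3 := by exact_mod_cast hp
  · refine le_trans ?_ (edist_le_ediam (u := u₀) (v := v₀))
    by_contra hlt
    push_neg at hlt
    have hne : (graph k).edist u₀ v₀ ≠ ⊤ := ne_top_of_lt hlt
    obtain ⟨p, hp⟩ := exists_walk_of_edist_ne_top hne
    have hlen : p.length ≤ 2 := by
      have h3 : (p.length : ℕ∞) < 3 := hp ▸ hlt
      have h4 : p.length < 3 := by exact_mod_cast h3
      omega
    rcases walk_short p hlen with h | h | ⟨w, h1, h2⟩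
    · rw [hu₀, hv₀] at h
      simp only [Subtype.mk.injEq, Prod.mk.injEq] at h
      exact h12 (Finset.singleton_injective h.2)
    · obtain ⟨hmem, -⟩ := adj_iff.mp h
      rw [hu₀] at hmem
      exact h02 (Finset.mem_singleton.mp hmem)
    · have e1 : w.1.1 = ⟨1, by omega⟩ := Finset.mem_singleton.mp (adj_iff.mp h1).2
      have e2 : w.1.1 = ⟨2, by omega⟩ := Finset.mem_singleton.mp (adj_iff.mp h2).1
      exact h12 (e1 ▸ e2)

lemma graph_diam (hk : 3 ≤ k) : (graph k).diam = 3 := by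
  rw [SimpleGraph.diam, graph_ediam hk]
  rfl

end Walks

section Coloring

variable {k : ℕ}

lemma image_c0 (v : Vert k) :
    (fun w : Vert k => w.1.1) '' ((graph k).neighborSet v) = ↑v.1.2 := by
  ext j
  constructor
  · rintro ⟨w, hw, rfl⟩
    exact (adj_iff.mp hw).2
  · intro hj
    have hj' : j ∈ v.1.2 := hj
    have hji : j ≠ v.1.1 := fun h => v.2.1 (h ▸ hj')
    exact ⟨⟨(j, {v.1.1}), by simpa using hji, Finset.singleton_nonempty _⟩,
      adj_iff.mpr ⟨Finset.mem_singleton_self _, hj'⟩, rfl⟩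

lemma isNL_c0 : IsNLColoring (graph k) (fun v : Vert k => v.1.1) := by
  constructor
  · intro u v huv h
    have h' : u.1.1 = v.1.1 := h
    exact v.2.1 (h' ▸ (adj_iff.mp huv).1)
  · intro u v hne hcol heq
    rw [image_c0, image_c0] at heq
    exact hne (Subtype.ext (Prod.ext hcol (Finset.coe_injective heq)))

lemma exists_neighbor (v : Vert k) : ∃ w, (graph k).Adj v w := by
  obtain ⟨a, ha⟩ := v.2.2
  have hai : a ≠ v.1.1 := fun h => v.2.1 (h ▸ ha)
  exact ⟨⟨(a, {v.1.1}), by simpa using hai, Finset.singleton_nonempty _⟩,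
    adj_iff.mpr ⟨Finset.mem_singleton_self _, ha⟩⟩

lemma k_le_of_isNL {m : ℕ} (hk : 3 ≤ k) (c : Vert k → Fin m)
    (h : IsNLColoring (graph k) c) : k ≤ m := by
  classical
  let F : Vert k → Vert m := fun v =>
    ⟨(c v, (Set.toFinite (c '' (graph k).neighborSet v)).toFinset),
      by
        rw [Set.Finite.mem_toFinset]
        rintro ⟨w, hw, hcw⟩
        exact h.1 v w hw hcw.symm,
      by
        obtain ⟨w, hw⟩ := exists_neighbor v
        exact ⟨c w, (Set.Finite.mem_toFinset _).mpr ⟨w, hw, rfl⟩⟩⟩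
  have hFinj : Function.Injective F := by
    intro u v hF
    by_contra hne
    have h1 : c u = c v := congrArg (fun x : Vert m => x.1.1) hF
    have h2 : (Set.toFinite (c '' (graph k).neighborSet u)).toFinset
        = (Set.toFinite (c '' (graph k).neighborSet v)).toFinset :=
      congrArg (fun x : Vert m => x.1.2) hF
    have h3 : c '' (graph k).neighborSet u = c '' (graph k).neighborSet v := by
      rw [← Set.Finite.coe_toFinset (Set.toFinite (c '' (graph k).neighborSet u)),
        ← Set.Finite.coe_toFinset (Set.toFinite (c '' (graph k).neighborSet v)), h2]
    exact h.2 u v hne h1 h3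
  have hcard := Fintype.card_le_of_injective F hFinj
  rw [card_vert, card_vert] at hcard
  by_contra hmk
  push_neg at hmk
  have mono : m * (2 ^ (m - 1) - 1) ≤ (k - 1) * (2 ^ (k - 2) - 1) :=
    Nat.mul_le_mul (by omega)
      (Nat.sub_le_sub_right (Nat.pow_le_pow_right (by norm_num) (by omega)) 1)
  have hp : (2:ℕ) ^ (k - 2) < 2 ^ (k - 1) := Nat.pow_lt_pow_right (by norm_num) (by omega)
  have hpos : 0 < 2 ^ (k - 1) - 1 := by
    have : (2:ℕ) ^ 1 ≤ 2 ^ (k - 1) := Nat.pow_le_pow_right (by norm_num) (by omega)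
    omega
  have lt2 : (k - 1) * (2 ^ (k - 2) - 1) < k * (2 ^ (k - 1) - 1) :=
    calc (k - 1) * (2 ^ (k - 2) - 1) ≤ (k - 1) * (2 ^ (k - 1) - 1) :=
          Nat.mul_le_mul_left _ (by omega)
      _ < k * (2 ^ (k - 1) - 1) := (Nat.mul_lt_mul_right hpos).mpr (by omega)
  omega

lemma nl_graph (hk : 3 ≤ k) : nlChromaticNumber (graph k) = k := by
  apply le_antisymm
  · exact Nat.sInf_le ⟨_, isNL_c0⟩
  · exact le_csInf ⟨k, _, isNL_c0⟩ fun m hm => by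
      obtain ⟨c, hc⟩ := hm
      exact k_le_of_isNL hk c hc

end Coloring

section Iso

variable {V W : Type*} {G : SimpleGraph V} {G' : SimpleGraph W}

lemma edist_le_of_hom (f : G →g G') (u v : V) : G'.edist (f u) (f v) ≤ G.edist u v := by
  rw [SimpleGraph.edist_eq_sInf (G := G)]
  refine le_sInf ?_
  rintro b ⟨p, rfl⟩
  calc G'.edist (f u) (f v) ≤ ((p.map f).length : ℕ∞) := SimpleGraph.edist_le _
    _ = (p.length : ℕ∞) := by rw [SimpleGraph.Walk.length_map]

lemma iso_edist (e : G ≃g G') (u v : V) : G'.edist (e u) (e v) = G.edist u v := by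
  refine le_antisymm (edist_le_of_hom e.toHom u v) ?_
  have h := edist_le_of_hom e.symm.toHom (e u) (e v)
  simpa using h

lemma iso_ediam (e : G ≃g G') : G'.ediam = G.ediam := by
  apply le_antisymm
  · refine ediam_le_of_edist_le fun u v => ?_
    rw [← e.apply_symm_apply u, ← e.apply_symm_apply v, iso_edist]
    exact edist_le_ediam
  · refine ediam_le_of_edist_le fun u v => ?_
    rw [← iso_edist e u v]
    exact edist_le_ediam

lemma iso_nl (e : G ≃g G') {m : ℕ} (c : W → Fin m) (hc : IsNLColoring G' c) :
    IsNLColoring G (fun v => c (e v)) := by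
  have himg : ∀ u : V, (fun v => c (e v)) '' G.neighborSet u = c '' G'.neighborSet (e u) := by
    intro u
    have hset : ⇑e '' G.neighborSet u = G'.neighborSet (e u) := by
      ext w
      constructor
      · rintro ⟨x, hx, rfl⟩
        exact e.apply_mem_neighborSet_iff.mpr hx
      · intro hw
        refine ⟨e.symm w, ?_, e.apply_symm_apply w⟩
        have hw2 : e (e.symm w) ∈ G'.neighborSet (e u) := by rwa [e.apply_symm_apply]
        exact e.apply_mem_neighborSet_iff.mp hw2
    rw [show ((fun v => c (e v)) : V → Fin m) = c ∘ ⇑e from rfl, Set.image_comp, hset]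
  constructor
  · intro u v huv
    exact hc.1 _ _ (e.map_adj_iff.mpr huv)
  · intro u v hne hcol
    rw [himg, himg]
    exact hc.2 _ _ (fun hEq => hne (e.injective hEq)) hcol

lemma iso_nlChromatic (e : G ≃g G') : nlChromaticNumber G = nlChromaticNumber G' := by
  unfold nlChromaticNumber
  congr 1
  ext m
  exact ⟨fun ⟨c, hc⟩ => ⟨fun w => c (e.symm w), iso_nl e.symm c hc⟩,
    fun ⟨c, hc⟩ => ⟨fun v => c (e v), iso_nl e c hc⟩⟩

lemma iso_degree (e : G ≃g G') (v : V) [Fintype (G.neighborSet v)]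
    [Fintype (G'.neighborSet (e v))] : G'.degree (e v) = G.degree v := by
  rw [← card_neighborSet_eq_degree, ← card_neighborSet_eq_degree]
  exact Fintype.card_congr (e.mapNeighborSet v).symm

lemma iso_ncard_edgeSet (e : G ≃g G') : G'.edgeSet.ncard = G.edgeSet.ncard := by
  rw [← Nat.card_coe_set_eq, ← Nat.card_coe_set_eq]
  exact Nat.card_congr e.mapEdgeSet.symm

end Iso

end NLAux

theorem exists_extremal_graph_nlChromaticNumber (k : ℕ) (hk : 3 ≤ k) :
    ∃ G : SimpleGraph (Fin (k * (2 ^ (k - 1) - 1))),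
      G.Connected ∧
      G.edgeSet.ncard = k * (k - 1) * 2 ^ (2 * k - 5) ∧
      G.diam = 3 ∧
      (letI : DecidableRel G.Adj := Classical.decRel _;
        G.minDegree = 2 ^ (k - 2) ∧ G.maxDegree = (k - 1) * 2 ^ (k - 2)) ∧
      nlChromaticNumber G = k := by
  classical
  have hc : Fintype.card (NLAux.Vert k) = k * (2 ^ (k - 1) - 1) := NLAux.card_vert k
  let e := (NLAux.graph k).overFinIso hc
  refine ⟨(NLAux.graph k).overFin hc, ?_, ?_, ?_, ?_, ?_⟩
  · exact (SimpleGraph.Iso.connected_iff e).mp (NLAux.graph_connected hk)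
  · rw [NLAux.iso_ncard_edgeSet e, ← SimpleGraph.coe_edgeFinset, Set.ncard_coe_finset]
    exact NLAux.edge_count hk
  · have h3 : ((NLAux.graph k).overFin hc).ediam = 3 :=
      (NLAux.iso_ediam e).trans (NLAux.graph_ediam hk)
    rw [SimpleGraph.diam, h3]
    rfl
  · letI : DecidableRel ((NLAux.graph k).overFin hc).Adj := Classical.decRel _
    have h01 : (⟨0, by omega⟩ : Fin k) ≠ ⟨1, by omega⟩ := by simp [Fin.ext_iff]
    set vmin : NLAux.Vert k := ⟨(⟨0, by omega⟩, {⟨1, by omega⟩}),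
      fun hm => h01 (Finset.mem_singleton.mp hm), Finset.singleton_nonempty _⟩ with hvmin
    set vmax : NLAux.Vert k := ⟨(⟨0, by omega⟩, Finset.univ.erase ⟨0, by omega⟩),
      Finset.notMem_erase _ _, Finset.card_pos.mp (by
        rw [Finset.card_erase_of_mem (Finset.mem_univ _), Finset.card_univ, Fintype.card_fin]
        omega)⟩ with hvmax
    haveI : Nonempty (Fin (k * (2 ^ (k - 1) - 1))) := ⟨e vmin⟩
    have hdeg : ∀ v : NLAux.Vert k,
        ((NLAux.graph k).overFin hc).degree (e v) = v.1.2.card * 2 ^ (k - 2) := fun v =>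
      (NLAux.iso_degree e v).trans (NLAux.degree_eq v)
    have hdeg' : ∀ x : Fin (k * (2 ^ (k - 1) - 1)),
        ((NLAux.graph k).overFin hc).degree x = (e.symm x).1.2.card * 2 ^ (k - 2) := by
      intro x
      have h := hdeg (e.symm x)
      rwa [e.apply_symm_apply] at h
    constructor
    · apply le_antisymm
      · have h1 := SimpleGraph.minDegree_le_degree ((NLAux.graph k).overFin hc) (e vmin)
        rw [hdeg vmin] at h1
        simpa [hvmin] using h1
      · apply SimpleGraph.le_minDegree_of_forall_le_degree
        intro x
        rw [hdeg' x]
        exact Nat.le_mul_of_pos_left _ (Finset.card_pos.mpr (e.symm x).2.2)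
    · apply le_antisymm
      · apply SimpleGraph.maxDegree_le_of_forall_degree_le
        intro x
        rw [hdeg' x]
        exact Nat.mul_le_mul_right _ (NLAux.card_le_of_mem _)
      · have h1 := SimpleGraph.degree_le_maxDegree ((NLAux.graph k).overFin hc) (e vmax)
        rw [hdeg vmax] at h1
        rw [hvmax] at h1
        simp only [Finset.card_erase_of_mem (Finset.mem_univ _), Finset.card_univ,
          Fintype.card_fin] at h1
        exact h1
  · rw [← NLAux.iso_nlChromatic e]
    exact NLAux.nl_graph hk
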